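/- Let G be a finite simple graph containing four distinct vertices b1, b2, b3, b4 such that b1b2, b2b3, b3b4, b4b1 are edges of G, the cycle b1b2b3b4 has no chord (i.e., b1b3 and b2b4 are not edges of G), deg_G(b1) = deg_G(b3) = 3, and deg_G(b2) = deg_G(b4) = 4. If G − {b1, b2, b3, b4} is (2,1)-decomposable, then G is (2,1)-decomposable. -/

import Mathlib

/-- A graph `G` is `d`-degenerate if every nonempty (induced) subgraph has a
vertex of degree at most `d`. -/
def SimpleGraph.DegenerateLE {V : Type*} (G : SimpleGraph V) (d : ℕ) : Prop :=
  ∀ S : Set V, S.Nonempty → ∃ v ∈ S, (S ∩ G.neighborSet v).ncard ≤ d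

/-- A graph `G` is `(d, h)`-decomposable if there is a subgraph `H` of `G` with
maximum degree at most `h` such that `G - E(H)` is `d`-degenerate. -/
def SimpleGraph.IsDecomposable {V : Type*} (G : SimpleGraph V) (d h : ℕ) : Prop :=
  ∃ H : SimpleGraph V, H ≤ G ∧ (∀ v, (H.neighborSet v).ncard ≤ h) ∧
    (G \ H).DegenerateLE d

/-- Reducibility of a chordless `(3,4,3,4)`-face: if `b₁b₂b₃b₄` is a chordless
`4`-cycle with `deg b₁ = deg b₃ = 3` and `deg b₂ = deg b₄ = 4`, and
`G - {b₁, b₂, b₃, b₄}` is `(2,1)`-decomposable, then `G` is `(2,1)`-decomposable. -/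
theorem statement3 {V : Type*} [Fintype V] (G : SimpleGraph V) (b₁ b₂ b₃ b₄ : V)
    (hne : [b₁, b₂, b₃, b₄].Pairwise (· ≠ ·))
    (h12 : G.Adj b₁ b₂) (h23 : G.Adj b₂ b₃) (h34 : G.Adj b₃ b₄) (h41 : G.Adj b₄ b₁)
    (h13 : ¬ G.Adj b₁ b₃) (h24 : ¬ G.Adj b₂ b₄)
    (hd1 : (G.neighborSet b₁).ncard = 3) (hd3 : (G.neighborSet b₃).ncard = 3)
    (hd2 : (G.neighborSet b₂).ncard = 4) (hd4 : (G.neighborSet b₄).ncard = 4)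
    (h : (G.induce (({b₁, b₂, b₃, b₄} : Set V)ᶜ)).IsDecomposable 2 1) :
    G.IsDecomposable 2 1 := by
  classical
  simp only [List.pairwise_cons, List.mem_cons, List.not_mem_nil, List.mem_singleton,
    forall_eq_or_imp, forall_eq, List.Pairwise.nil] at hne
  obtain ⟨⟨ne12, ne13, ne14, -⟩, ⟨ne23, ne24, -⟩, ⟨ne34, -⟩, -⟩ := hne
  set B : Set V := {b₁, b₂, b₃, b₄} with hB
  obtain ⟨H', hle', hdeg', hdg'⟩ := h
  set M : SimpleGraph V := SimpleGraph.fromEdgeSet {s(b₁,b₂), s(b₃,b₄)} with hM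
  set Hm : SimpleGraph V := SimpleGraph.map (Function.Embedding.subtype fun v => v ∈ Bᶜ) H'
    with hHm
  -- basic adjacency facts
  have hMadj : ∀ a b : V, M.Adj a b ↔
      ((a = b₁ ∧ b = b₂) ∨ (a = b₂ ∧ b = b₁) ∨ (a = b₃ ∧ b = b₄) ∨ (a = b₄ ∧ b = b₃)) := by
    intro a b
    constructor
    · intro hab
      rw [hM, SimpleGraph.fromEdgeSet_adj] at hab
      obtain ⟨hmem, -⟩ := hab
      simp only [Set.mem_insert_iff, Set.mem_singleton_iff, Sym2.eq_iff] at hmem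
      tauto
    · rintro (⟨rfl, rfl⟩ | ⟨rfl, rfl⟩ | ⟨rfl, rfl⟩ | ⟨rfl, rfl⟩) <;>
        rw [hM, SimpleGraph.fromEdgeSet_adj] <;>
        simp only [Set.mem_insert_iff, Set.mem_singleton_iff, Sym2.eq_iff] <;> tauto
  have hHmadj : ∀ a b : V, Hm.Adj a b ↔
      ∃ (ha : a ∈ Bᶜ) (hb : b ∈ Bᶜ), H'.Adj ⟨a, ha⟩ ⟨b, hb⟩ := by
    intro a b
    rw [hHm, SimpleGraph.map_adj]
    constructor
    · rintro ⟨u, v, huv, rfl, rfl⟩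
      exact ⟨u.2, v.2, huv⟩
    · rintro ⟨ha, hb, hab⟩
      exact ⟨⟨a, ha⟩, ⟨b, hb⟩, hab, rfl, rfl⟩
  have hb1B : b₁ ∈ B := by simp [hB]
  have hb2B : b₂ ∈ B := by simp [hB]
  have hb3B : b₃ ∈ B := by simp [hB]
  have hb4B : b₄ ∈ B := by simp [hB]
  have hHmB : ∀ a ∈ B, ∀ b, ¬ Hm.Adj a b := by
    intro a ha b hab
    rw [hHmadj] at hab
    obtain ⟨ha', -, -⟩ := hab
    exact ha' ha
  refine ⟨Hm ⊔ M, ?_, ?_, ?_⟩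
  · -- H ≤ G
    refine sup_le ?_ ?_
    · intro a b hab
      rw [hHmadj] at hab
      obtain ⟨ha, hb, hab⟩ := hab
      exact hle' hab
    · intro a b hab
      rw [hMadj] at hab
      rcases hab with ⟨rfl, rfl⟩ | ⟨rfl, rfl⟩ | ⟨rfl, rfl⟩ | ⟨rfl, rfl⟩
      exacts [h12, h12.symm, h34, h34.symm]
  · -- max degree ≤ 1
    intro v
    by_cases hv : v ∈ B
    · have hsub : ∀ p : V, (v = b₁ ∧ p = b₂) ∨ (v = b₂ ∧ p = b₁) ∨ (v = b₃ ∧ p = b₄) ∨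
          (v = b₄ ∧ p = b₃) → ((Hm ⊔ M).neighborSet v ⊆ {p}) := by
        rintro p hp w hw
        rw [SimpleGraph.mem_neighborSet, SimpleGraph.sup_adj] at hw
        rcases hw with hw | hw
        · exact absurd hw (hHmB v hv w)
        · rw [hMadj] at hw
          rcases hp with ⟨rfl, rfl⟩ | ⟨rfl, rfl⟩ | ⟨rfl, rfl⟩ | ⟨rfl, rfl⟩ <;>
          · simp only [Set.mem_singleton_iff]
            rcases hw with ⟨h1, h2⟩ | ⟨h1, h2⟩ | ⟨h1, h2⟩ | ⟨h1, h2⟩ <;>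
              first | exact h2 | (exfalso; subst h1; tauto)
      have : ((Hm ⊔ M).neighborSet v).ncard ≤ ({b₁} : Set V).ncard ∨
          ((Hm ⊔ M).neighborSet v).ncard ≤ ({b₂} : Set V).ncard ∨
          ((Hm ⊔ M).neighborSet v).ncard ≤ ({b₃} : Set V).ncard ∨
          ((Hm ⊔ M).neighborSet v).ncard ≤ ({b₄} : Set V).ncard := by
        rcases hv with rfl | rfl | rfl | rfl
        · exact Or.inr (Or.inl (Set.ncard_le_ncard (hsub b₂ (by tauto)) (Set.toFinite _)))
        · exact Or.inl (Set.ncard_le_ncard (hsub b₁ (by tauto)) (Set.toFinite _))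
        · exact Or.inr (Or.inr (Or.inr (Set.ncard_le_ncard (hsub b₄ (by tauto)) (Set.toFinite _))))
        · exact Or.inr (Or.inr (Or.inl (Set.ncard_le_ncard (hsub b₃ (by tauto)) (Set.toFinite _))))
      simpa [Set.ncard_singleton] using this
    · have hv' : v ∈ Bᶜ := hv
      have hsub : (Hm ⊔ M).neighborSet v ⊆
          Subtype.val '' (H'.neighborSet ⟨v, hv'⟩) := by
        intro w hw
        rw [SimpleGraph.mem_neighborSet, SimpleGraph.sup_adj] at hw
        rcases hw with hw | hw
        · rw [hHmadj] at hw
          obtain ⟨ha, hb, hab⟩ := hw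
          exact ⟨⟨w, hb⟩, hab, rfl⟩
        · rw [hMadj] at hw
          exfalso
          rcases hw with ⟨rfl, -⟩ | ⟨rfl, -⟩ | ⟨rfl, -⟩ | ⟨rfl, -⟩ <;> exact hv (by simp [hB])
      calc ((Hm ⊔ M).neighborSet v).ncard
          ≤ (Subtype.val '' (H'.neighborSet ⟨v, hv'⟩)).ncard :=
            Set.ncard_le_ncard hsub (Set.toFinite _)
        _ = (H'.neighborSet ⟨v, hv'⟩).ncard :=
            Set.ncard_image_of_injective _ Subtype.val_injective
        _ ≤ 1 := hdeg' _
  · -- degeneracy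
    intro S hS
    have hHadj12 : (Hm ⊔ M).Adj b₁ b₂ :=
      (SimpleGraph.sup_adj Hm M _ _).mpr (Or.inr ((hMadj b₁ b₂).2 (by tauto)))
    have hHadj34 : (Hm ⊔ M).Adj b₃ b₄ :=
      (SimpleGraph.sup_adj Hm M _ _).mpr (Or.inr ((hMadj b₃ b₄).2 (by tauto)))
    by_cases h1S : b₁ ∈ S
    · refine ⟨b₁, h1S, ?_⟩
      have hsub : S ∩ (G \ (Hm ⊔ M)).neighborSet b₁ ⊆ G.neighborSet b₁ \ {b₂} := by
        rintro w ⟨-, hwadj, hwH⟩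
        refine ⟨hwadj, ?_⟩
        rintro rfl
        exact hwH hHadj12
      have : (G.neighborSet b₁ \ {b₂}).ncard = 2 := by
        have hm : b₂ ∈ G.neighborSet b₁ := h12
        rw [Set.ncard_diff_singleton_of_mem hm, hd1]
      calc (S ∩ (G \ (Hm ⊔ M)).neighborSet b₁).ncard
          ≤ (G.neighborSet b₁ \ {b₂}).ncard := Set.ncard_le_ncard hsub (Set.toFinite _)
        _ = 2 := this
    · by_cases h3S : b₃ ∈ S
      · refine ⟨b₃, h3S, ?_⟩
        have hsub : S ∩ (G \ (Hm ⊔ M)).neighborSet b₃ ⊆ G.neighborSet b₃ \ {b₄} := by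
          rintro w ⟨-, hwadj, hwH⟩
          refine ⟨hwadj, ?_⟩
          rintro rfl
          exact hwH hHadj34
        have : (G.neighborSet b₃ \ {b₄}).ncard = 2 := by
          have hm : b₄ ∈ G.neighborSet b₃ := h34
          rw [Set.ncard_diff_singleton_of_mem hm, hd3]
        calc (S ∩ (G \ (Hm ⊔ M)).neighborSet b₃).ncard
            ≤ (G.neighborSet b₃ \ {b₄}).ncard := Set.ncard_le_ncard hsub (Set.toFinite _)
          _ = 2 := this
      · by_cases h2S : b₂ ∈ S
        · refine ⟨b₂, h2S, ?_⟩
          have hsub : S ∩ (G \ (Hm ⊔ M)).neighborSet b₂ ⊆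
              (G.neighborSet b₂ \ {b₁}) \ {b₃} := by
            rintro w ⟨hwS, hwadj, hwH⟩
            refine ⟨⟨hwadj, ?_⟩, ?_⟩
            · rintro rfl; exact hwH hHadj12.symm
            · rintro rfl; exact h3S hwS
          have h1mem : b₁ ∈ G.neighborSet b₂ := h12.symm
          have h3mem : b₃ ∈ G.neighborSet b₂ \ {b₁} := ⟨h23, by simpa using ne13.symm⟩
          have : ((G.neighborSet b₂ \ {b₁}) \ {b₃}).ncard = 2 := by
            rw [Set.ncard_diff_singleton_of_mem h3mem,
              Set.ncard_diff_singleton_of_mem h1mem, hd2]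
          calc (S ∩ (G \ (Hm ⊔ M)).neighborSet b₂).ncard
              ≤ ((G.neighborSet b₂ \ {b₁}) \ {b₃}).ncard :=
                Set.ncard_le_ncard hsub (Set.toFinite _)
            _ = 2 := this
        · by_cases h4S : b₄ ∈ S
          · refine ⟨b₄, h4S, ?_⟩
            have hsub : S ∩ (G \ (Hm ⊔ M)).neighborSet b₄ ⊆
                (G.neighborSet b₄ \ {b₃}) \ {b₁} := by
              rintro w ⟨hwS, hwadj, hwH⟩
              refine ⟨⟨hwadj, ?_⟩, ?_⟩
              · rintro rfl; exact hwH hHadj34.symm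
              · rintro rfl; exact h1S hwS
            have h3mem : b₃ ∈ G.neighborSet b₄ := h34.symm
            have h1mem : b₁ ∈ G.neighborSet b₄ \ {b₃} := ⟨h41, by simpa using ne13⟩
            have : ((G.neighborSet b₄ \ {b₃}) \ {b₁}).ncard = 2 := by
              rw [Set.ncard_diff_singleton_of_mem h1mem,
                Set.ncard_diff_singleton_of_mem h3mem, hd4]
            calc (S ∩ (G \ (Hm ⊔ M)).neighborSet b₄).ncard
                ≤ ((G.neighborSet b₄ \ {b₃}) \ {b₁}).ncard :=
                  Set.ncard_le_ncard hsub (Set.toFinite _)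
              _ = 2 := this
          · -- S ∩ B = ∅
            have hSB : ∀ w ∈ S, w ∈ Bᶜ := by
              intro w hw hwB
              rcases hwB with rfl | rfl | rfl | rfl
              exacts [h1S hw, h2S hw, h3S hw, h4S hw]
            set S' : Set ↥(Bᶜ) := {x | ↑x ∈ S} with hS'
            obtain ⟨w₀, hw₀⟩ := hS
            have hS'ne : S'.Nonempty := ⟨⟨w₀, hSB w₀ hw₀⟩, hw₀⟩
            obtain ⟨v, hvS', hvcard⟩ := hdg' S' hS'ne
            refine ⟨↑v, hvS', ?_⟩
            have heq : S ∩ (G \ (Hm ⊔ M)).neighborSet ↑v =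
                Subtype.val '' (S' ∩ (G.induce Bᶜ \ H').neighborSet v) := by
              ext w
              constructor
              · rintro ⟨hwS, hwadj, hwH⟩
                refine ⟨⟨w, hSB w hwS⟩, ⟨hwS, ?_, ?_⟩, rfl⟩
                · exact hwadj
                · intro hH'
                  exact hwH ((SimpleGraph.sup_adj Hm M _ _).mpr (Or.inl ((hHmadj _ _).2 ⟨v.2, hSB w hwS, hH'⟩)))
              · rintro ⟨w', ⟨hw'S, hw'adj, hw'H⟩, rfl⟩
                refine ⟨hw'S, hw'adj, ?_⟩
                intro hH
                rw [SimpleGraph.sup_adj] at hH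
                rcases hH with hH | hH
                · rw [hHmadj] at hH
                  obtain ⟨ha, hb, hab⟩ := hH
                  exact hw'H (by convert hab)
                · rw [hMadj] at hH
                  rcases hH with ⟨hv1, -⟩ | ⟨hv1, -⟩ | ⟨hv1, -⟩ | ⟨hv1, -⟩ <;>
                    exact v.2 (by rw [hv1]; simp [hB])
            rw [heq, Set.ncard_image_of_injective _ Subtype.val_injective]
            exact hvcard
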